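/- Let d ≥ 2 and t ≥ d+1 be integers, and let P be a set of n ≥ 4·d·t^(2d+2) points in ℝ^d such that no d+1 points of P lie on a common hyperplane (affine subspace of dimension d-1). Then there exists a subset S ⊆ P with |S| ≥ t such that all binom(t, d+1) simplices spanned by (d+1)-element subsets of S have pairwise distinct volumes. -/

import Mathlib

open Finset Matrix Function
set_option linter.all false
open scoped Classical

/-- Volume of the simplex spanned by a set of `d+1` points in `ℝ^d`. -/
noncomputable def simplexVolume {d : ℕ} (s : Finset (EuclideanSpace ℝ (Fin d))) : ℝ :=
  sSup {v : ℝ | ∃ f : Fin (d + 1) → EuclideanSpace ℝ (Fin d),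
    Set.range f = ↑s ∧
    v = |Matrix.det (Matrix.of fun i j : Fin d => (f i.succ - f 0) j)| /
          (Nat.factorial d)}

noncomputable section Aux

variable {d : ℕ}

local notation "Pt" => EuclideanSpace ℝ (Fin d)

def rowF (x : Pt) : Fin (d + 1) → ℝ := Fin.cons 1 (fun j => x j)
def rowL (x : Pt) : Fin (d + 1) → ℝ := Fin.cons 0 (fun j => x j)
def matOf (f : Fin (d + 1) → Pt) : Matrix (Fin (d + 1)) (Fin (d + 1)) ℝ :=
  Matrix.of fun i => rowF (f i)
def Dh (f : Fin (d + 1) → Pt) : ℝ := (matOf f).det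

lemma Dh_eq (f : Fin (d + 1) → Pt) :
    Dh f = Matrix.det (Matrix.of fun i j : Fin d => (f i.succ - f 0) j) := by
  have hB : Dh f = Matrix.det (Matrix.of (Fin.cons (rowF (f 0))
      (fun i => rowL (f i.succ - f 0)))) := by
    apply Matrix.det_eq_of_forall_row_eq_smul_add_const
      (Fin.cons 0 (fun _ => (1:ℝ))) 0 (Fin.cons_zero _ _)
    intro i j
    refine Fin.cases ?_ (fun i => ?_) i
    · simp [matOf, rowF]
    · refine Fin.cases ?_ (fun j => ?_) j <;>
        simp [matOf, rowF, rowL, PiLp.sub_apply]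
  rw [hB, Matrix.det_succ_column_zero, Fin.sum_univ_succ]
  simp only [Fin.val_zero, pow_zero, one_mul, Matrix.of_apply, Fin.cons_zero, Fin.cons_succ,
    rowF, rowL, Fin.val_succ]
  simp only [mul_zero, zero_mul, Finset.sum_const_zero, add_zero]
  congr 1

lemma abs_Dh_comp (f : Fin (d + 1) → Pt) (σ : Equiv.Perm (Fin (d + 1))) :
    |Dh (f ∘ σ)| = |Dh f| := by
  have h : matOf (f ∘ σ) = (matOf f).submatrix σ id := rfl
  unfold Dh
  rw [h, Matrix.det_permute]
  rcases Int.units_eq_one_or (Equiv.Perm.sign σ) with hs | hs <;>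
    simp [hs, abs_mul]


lemma exists_perm_comp {s : Finset Pt} (hs : s.card = d + 1)
    {f g : Fin (d + 1) → Pt} (hf : Set.range f = ↑s) (hg : Set.range g = ↑s) :
    ∃ σ : Equiv.Perm (Fin (d + 1)), f ∘ σ = g := by
  have hcard : Fintype.card (↥s) = Fintype.card (Fin (d + 1)) := by
    rw [Fintype.card_coe, hs, Fintype.card_fin]
  have mk : ∀ h : Fin (d + 1) → Pt, Set.range h = ↑s →
      { h' : Fin (d + 1) → ↥s // Function.Bijective h' ∧ ∀ i, (h' i : Pt) = h i } := by
    intro h hh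
    refine ⟨fun i => ⟨h i, by rw [← Finset.mem_coe, ← hh]; exact Set.mem_range_self i⟩, ?_, fun i => rfl⟩
    rw [Fintype.bijective_iff_surjective_and_card]
    refine ⟨fun y => ?_, hcard.symm⟩
    have : (y : Pt) ∈ Set.range h := by rw [hh]; exact Finset.mem_coe.2 y.2
    obtain ⟨i, hi⟩ := this
    exact ⟨i, Subtype.ext hi⟩
  obtain ⟨f', hf', hfv⟩ := mk f hf
  obtain ⟨g', hg', hgv⟩ := mk g hg
  refine ⟨(Equiv.ofBijective g' hg').trans (Equiv.ofBijective f' hf').symm, ?_⟩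
  funext i
  have : f' ((Equiv.ofBijective f' hf').symm (g' i)) = g' i :=
    (Equiv.ofBijective f' hf').apply_symm_apply (g' i)
  calc f ((Equiv.ofBijective f' hf').symm ((Equiv.ofBijective g' hg') i))
      = (f' ((Equiv.ofBijective f' hf').symm (g' i)) : Pt) := (hfv _).symm
    _ = (g' i : Pt) := by rw [this]
    _ = g i := hgv i

lemma simplexVolume_eq {s : Finset Pt} (hs : s.card = d + 1)
    {f : Fin (d + 1) → Pt} (hf : Set.range f = ↑s) :
    simplexVolume s = |Dh f| / (Nat.factorial d) := by
  have hset : {v : ℝ | ∃ g : Fin (d + 1) → Pt, Set.range g = ↑s ∧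
      v = |Matrix.det (Matrix.of fun i j : Fin d => (g i.succ - g 0) j)| / (Nat.factorial d)}
      = {|Dh f| / (Nat.factorial d)} := by
    ext v
    simp only [Set.mem_setOf_eq, Set.mem_singleton_iff]
    constructor
    · rintro ⟨g, hg, rfl⟩
      obtain ⟨σ, hσ⟩ := exists_perm_comp hs hf hg
      rw [← Dh_eq, ← hσ, abs_Dh_comp]
    · rintro rfl
      exact ⟨f, hf, by rw [← Dh_eq]⟩
  unfold simplexVolume
  rw [hset, csSup_singleton]

lemma Dh_ne_zero {P : Finset Pt}
    (hgen : ∀ s ∈ Finset.powersetCard (d + 1) P,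
      affineSpan ℝ (s : Set Pt) = ⊤)
    {f : Fin (d + 1) → Pt} (hinj : Function.Injective f)
    (hran : ∀ i, f i ∈ P) : Dh f ≠ 0 := by
  classical
  have hsmem : (Finset.image f Finset.univ) ∈ Finset.powersetCard (d + 1) P := by
    rw [Finset.mem_powersetCard]
    constructor
    · intro x hx
      obtain ⟨i, _, rfl⟩ := Finset.mem_image.1 hx
      exact hran i
    · rw [Finset.card_image_of_injective _ hinj, Finset.card_univ, Fintype.card_fin]
  have hspan : affineSpan ℝ ((Finset.image f Finset.univ : Finset Pt) : Set Pt) = ⊤ :=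
    hgen _ hsmem
  have hcoe : ((Finset.image f Finset.univ : Finset Pt) : Set Pt) = Set.range f := by
    rw [Finset.coe_image, Finset.coe_univ, Set.image_univ]
  rw [hcoe] at hspan
  have hvs : vectorSpan ℝ (Set.range f) = ⊤ :=
    AffineSubspace.vectorSpan_eq_top_of_affineSpan_eq_top ℝ _ _ hspan
  rw [vectorSpan_range_eq_span_range_vsub_right ℝ f 0] at hvs
  set v : Fin d → Pt := fun i => f i.succ - f 0 with hv
  have htopv : ⊤ ≤ Submodule.span ℝ (Set.range v) := by
    rw [← hvs, Submodule.span_le]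
    rintro x ⟨i, rfl⟩
    refine Fin.cases ?_ (fun i => ?_) i
    · simp only [vsub_eq_sub, sub_self]
      exact Submodule.zero_mem _
    · exact Submodule.subset_span ⟨i, rfl⟩
  set E := WithLp.linearEquiv 2 ℝ (Fin d → ℝ) with hE
  set w : Fin d → (Fin d → ℝ) := fun i => E (v i) with hw
  have htopw : ⊤ ≤ Submodule.span ℝ (Set.range w) := by
    have h1 : Set.range w = ⇑E.toLinearMap '' Set.range v := by
      rw [← Set.range_comp]; rfl
    rw [h1, ← Submodule.map_span]
    intro x _
    refine ⟨E.symm x, htopv trivial, ?_⟩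
    simp
  have hcardf : Fintype.card (Fin d) = Module.finrank ℝ (Fin d → ℝ) := by
    rw [Module.finrank_fintype_fun_eq_card]
  have hli : LinearIndependent ℝ w :=
    linearIndependent_of_top_le_span_of_card_eq_finrank htopw hcardf
  have hM : (fun i => (Matrix.of fun i j : Fin d => (f i.succ - f 0) j) i) = w := by
    funext i; rfl
  have hunit : IsUnit (Matrix.of fun i j : Fin d => (f i.succ - f 0) j) := by
    rw [← Matrix.linearIndependent_rows_iff_isUnit]; exact hli
  have hdet : IsUnit (Matrix.det (Matrix.of fun i j : Fin d => (f i.succ - f 0) j)) :=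
    (Matrix.isUnit_iff_isUnit_det _).1 hunit
  rw [Dh_eq]
  exact hdet.ne_zero

/-- enumeration of a `d`-element finset -/
def enum (B : Finset Pt) : Fin d → Pt := fun i =>
  if h : B.card = d then
    ((Fintype.equivFinOfCardEq (by rw [Fintype.card_coe, h] :
      Fintype.card ↥B = d)).symm i : Pt)
  else 0

lemma enum_mem {B : Finset Pt} (h : B.card = d) (i : Fin d) : enum B i ∈ B := by
  simp only [enum, dif_pos h]
  exact Finset.coe_mem _

lemma enum_inj {B : Finset Pt} (h : B.card = d) : Function.Injective (enum B) := by
  intro i j hij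
  simp only [enum, dif_pos h] at hij
  exact (Fintype.equivFinOfCardEq _).symm.injective (Subtype.ext hij)

lemma enum_range {B : Finset Pt} (h : B.card = d) : Set.range (enum B) = ↑B := by
  apply Set.eq_of_subset_of_subset
  · rintro x ⟨i, rfl⟩; exact enum_mem h i
  · intro b hb
    refine ⟨(Fintype.equivFinOfCardEq (by rw [Fintype.card_coe, h] :
      Fintype.card ↥B = d)) ⟨b, hb⟩, ?_⟩
    simp [enum, dif_pos h]

def G (B : Finset Pt) (p : Pt) : ℝ := Dh (Fin.cons p (enum B))

def baseM (B : Finset Pt) : Matrix (Fin (d + 1)) (Fin (d + 1)) ℝ :=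
  matOf (Fin.cons 0 (enum B))

def LB (B : Finset Pt) (p : Pt) : ℝ := ((baseM B).updateRow 0 (rowL p)).det

def cB (B : Finset Pt) : ℝ := ((baseM B).updateRow 0 (rowF 0)).det

lemma matOf_cons (p : Pt) (g : Fin d → Pt) :
    matOf (Fin.cons p g) = (matOf (Fin.cons 0 g)).updateRow 0 (rowF p) := by
  ext i j
  refine Fin.cases ?_ (fun i => ?_) i
  · rw [Matrix.updateRow_self]
    simp [matOf]
  · rw [Matrix.updateRow_ne (Fin.succ_ne_zero i)]
    simp [matOf]

lemma rowF_eq (p : Pt) : rowF p = rowF (0 : Pt) + rowL p := by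
  funext j
  refine Fin.cases ?_ (fun j => ?_) j <;>
    simp [rowF, rowL, Fin.cons_zero, Fin.cons_succ, PiLp.zero_apply]

lemma G_eq (B : Finset Pt) (p : Pt) : G B p = cB B + LB B p := by
  unfold G Dh cB LB
  rw [matOf_cons, rowF_eq, Matrix.det_updateRow_add]
  rfl

lemma rowL_add (x y : Pt) : rowL (x + y) = rowL x + rowL y := by
  funext j
  refine Fin.cases ?_ (fun j => ?_) j <;>
    simp [rowL, Fin.cons_zero, Fin.cons_succ, PiLp.add_apply]

lemma rowL_smul (a : ℝ) (x : Pt) : rowL (a • x) = a • rowL x := by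
  funext j
  refine Fin.cases ?_ (fun j => ?_) j <;>
    simp [rowL, Fin.cons_zero, Fin.cons_succ, PiLp.smul_apply]

lemma LB_add (B : Finset Pt) (x y : Pt) : LB B (x + y) = LB B x + LB B y := by
  unfold LB
  rw [rowL_add, Matrix.det_updateRow_add]

lemma LB_smul (B : Finset Pt) (a : ℝ) (x : Pt) : LB B (a • x) = a * LB B x := by
  unfold LB
  rw [rowL_smul, Matrix.det_updateRow_smul]

section withP
variable {P : Finset (EuclideanSpace ℝ (Fin d))}

/-- key lemma: an affine functional vanishing on d+1 points of P is trivial -/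
lemma KL (hgen : ∀ s ∈ Finset.powersetCard (d + 1) P, affineSpan ℝ (s : Set (EuclideanSpace ℝ (Fin d))) = ⊤) {T : Finset Pt} (hTP : T ⊆ P) (hT : T.card = d + 1)
    (ℓ : Pt → ℝ) (hadd : ∀ x y, ℓ (x + y) = ℓ x + ℓ y)
    (hsmul : ∀ (a : ℝ) x, ℓ (a • x) = a * ℓ x)
    (c κ : ℝ) (hval : ∀ p ∈ T, ℓ p + c = κ) :
    (∀ x, ℓ x = 0) ∧ c = κ := by
  have hTmem : T ∈ Finset.powersetCard (d + 1) P := Finset.mem_powersetCard.2 ⟨hTP, hT⟩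
  have hspan := hgen T hTmem
  have hvs : vectorSpan ℝ (↑T : Set Pt) = ⊤ :=
    AffineSubspace.vectorSpan_eq_top_of_affineSpan_eq_top ℝ _ _ hspan
  have hz : ∀ x : Pt, ℓ x = 0 := by
    have h0 : ℓ 0 = 0 := by
      have := hadd 0 0
      rw [add_zero] at this
      linarith
    have hneg : ∀ x, ℓ (-x) = -ℓ x := by
      intro x
      have := hsmul (-1) x
      rw [neg_one_smul] at this
      rw [this]; ring
    have hsub : ∀ x y : Pt, ℓ (x - y) = ℓ x - ℓ y := by
      intro x y
      rw [sub_eq_add_neg, hadd, hneg]; ring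
    intro x
    have hx : x ∈ vectorSpan ℝ (↑T : Set Pt) := hvs ▸ Submodule.mem_top
    rw [vectorSpan_def] at hx
    induction hx using Submodule.span_induction with
    | mem v hv =>
      obtain ⟨p, hp, q, hq, rfl⟩ := hv
      have h1 := hval p hp
      have h2 := hval q hq
      show ℓ (p -ᵥ q) = 0
      rw [vsub_eq_sub, hsub]
      linarith
    | zero => exact h0
    | add x y _ _ hx hy => rw [hadd]; linarith
    | smul a x _ hx => rw [hsmul]; rw [hx]; ring
  refine ⟨hz, ?_⟩
  have hT0 : T.Nonempty := Finset.card_pos.1 (by omega)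
  obtain ⟨p, hp⟩ := hT0
  have := hval p hp
  rw [hz p] at this
  linarith

/-- counting lemma -/
lemma CL (hgen : ∀ s ∈ Finset.powersetCard (d + 1) P, affineSpan ℝ (s : Set (EuclideanSpace ℝ (Fin d))) = ⊤) (ℓ : Pt → ℝ) (hadd : ∀ x y, ℓ (x + y) = ℓ x + ℓ y)
    (hsmul : ∀ (a : ℝ) x, ℓ (a • x) = a * ℓ x)
    (c κ : ℝ) (hnc : (∃ x, ℓ x ≠ 0) ∨ c ≠ κ) :
    (P.filter (fun p => ℓ p + c = κ)).card ≤ d := by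
  classical
  by_contra hcon
  push_neg at hcon
  obtain ⟨T, hTsub, hTcard⟩ := Finset.exists_subset_card_eq (by omega :
    d + 1 ≤ (P.filter (fun p => ℓ p + c = κ)).card)
  have hTP : T ⊆ P := hTsub.trans (Finset.filter_subset _ _)
  have hval : ∀ p ∈ T, ℓ p + c = κ := fun p hp =>
    (Finset.mem_filter.1 (hTsub hp)).2
  obtain ⟨hz, hcκ⟩ := KL hgen hTP hTcard ℓ hadd hsmul c κ hval
  rcases hnc with ⟨x, hx⟩ | h
  · exact hx (hz x)
  · exact h hcκ

lemma G_vanish {B : Finset Pt} (hB : B.card = d) {b : Pt} (hb : b ∈ B) :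
    G B b = 0 := by
  have : b ∈ Set.range (enum B) := by rw [enum_range hB]; exact hb
  obtain ⟨i, hi⟩ := this
  unfold G Dh
  apply Matrix.det_zero_of_row_eq (Fin.succ_ne_zero i).symm
  have h1 : (Fin.cons b (enum B) : Fin (d + 1) → EuclideanSpace ℝ (Fin d)) 0 = b :=
    Fin.cons_zero _ _
  have h2 : (Fin.cons b (enum B) : Fin (d + 1) → EuclideanSpace ℝ (Fin d)) i.succ = b := by
    rw [Fin.cons_succ, hi]
  show rowF ((Fin.cons b (enum B) : Fin (d + 1) → EuclideanSpace ℝ (Fin d)) 0)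
      = rowF ((Fin.cons b (enum B) : Fin (d + 1) → EuclideanSpace ℝ (Fin d)) i.succ)
  rw [h1, h2]

lemma LB_ne (hgen : ∀ s ∈ Finset.powersetCard (d + 1) P, affineSpan ℝ (s : Set (EuclideanSpace ℝ (Fin d))) = ⊤) (hd : 1 ≤ d) (hPd : d < P.card) {B : Finset Pt} (hBP : B ⊆ P)
    (hB : B.card = d) : ∃ x, LB B x ≠ 0 := by
  classical
  by_contra hall
  push_neg at hall
  have hGconst : ∀ p : Pt, G B p = cB B := by
    intro p; rw [G_eq, hall, add_zero]
  have hc0 : cB B = 0 := by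
    have := hGconst (enum B (⟨0, by omega⟩ : Fin d))
    rw [G_vanish hB (enum_mem hB _)] at this
    linarith
  have hq : ∃ q ∈ P, q ∉ B := by
    by_contra hq
    push_neg at hq
    have : P ⊆ B := hq
    have := Finset.card_le_card this
    omega
  obtain ⟨q, hqP, hqB⟩ := hq
  have hinj : Function.Injective (Fin.cons q (enum B) : Fin (d + 1) → Pt) := by
    apply Fin.cons_injective_of_injective
    · rw [enum_range hB]
      exact fun h => hqB (Finset.mem_coe.1 h)
    · exact enum_inj hB
  have hran : ∀ i, (Fin.cons q (enum B) : Fin (d + 1) → Pt) i ∈ P := by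
    intro i
    refine Fin.cases ?_ (fun i => ?_) i
    · rw [Fin.cons_zero]; exact hqP
    · rw [Fin.cons_succ]; exact hBP (enum_mem hB i)
  have := Dh_ne_zero hgen hinj hran
  apply this
  show G B q = 0
  rw [hGconst, hc0]

/-- single constraint counting -/
lemma single_card (hgen : ∀ s ∈ Finset.powersetCard (d + 1) P, affineSpan ℝ (s : Set (EuclideanSpace ℝ (Fin d))) = ⊤) (hd : 1 ≤ d) (hPd : d < P.card) {B : Finset Pt} (hBP : B ⊆ P)
    (hB : B.card = d) (κ : ℝ) :
    (P.filter (fun p => G B p = κ)).card ≤ d := by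
  classical
  have heq : P.filter (fun p => G B p = κ) = P.filter (fun p => LB B p + cB B = κ) := by
    apply Finset.filter_congr
    intro p _
    rw [G_eq]
    constructor <;> intro h <;> linarith
  rw [heq]
  exact CL hgen (LB B) (LB_add B) (LB_smul B) (cB B) κ (Or.inl (LB_ne hgen hd hPd hBP hB))

/-- pair constraint counting -/
lemma pair_card (hgen : ∀ s ∈ Finset.powersetCard (d + 1) P, affineSpan ℝ (s : Set (EuclideanSpace ℝ (Fin d))) = ⊤) (hd : 1 ≤ d) (hPd : d < P.card) {B₁ B₂ : Finset Pt}
    (hB₁P : B₁ ⊆ P) (hB₂P : B₂ ⊆ P) (hB₁ : B₁.card = d) (hB₂ : B₂.card = d)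
    (hne : B₁ ≠ B₂) (ε : ℝ) (hε : ε = 1 ∨ ε = -1) :
    (P.filter (fun p => G B₁ p = ε * G B₂ p)).card ≤ d := by
  classical
  set ℓ : Pt → ℝ := fun p => LB B₁ p - ε * LB B₂ p with hℓ
  have hadd : ∀ x y, ℓ (x + y) = ℓ x + ℓ y := by
    intro x y; simp only [hℓ, LB_add]; ring
  have hsmul : ∀ (a : ℝ) x, ℓ (a • x) = a * ℓ x := by
    intro a x; simp only [hℓ, LB_smul]; ring
  have heq : P.filter (fun p => G B₁ p = ε * G B₂ p)
      = P.filter (fun p => ℓ p + (cB B₁ - ε * cB B₂) = 0) := by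
    apply Finset.filter_congr
    intro p _
    simp only [hℓ, G_eq]
    constructor <;> intro h <;> linarith [h]
  rw [heq]
  apply CL hgen ℓ hadd hsmul _ _
  by_cases hdeg : ∀ x, ℓ x = 0
  · right
    intro hc0
    -- then G B₁ = ε * G B₂ everywhere
    have hGeq : ∀ p : Pt, G B₁ p = ε * G B₂ p := by
      intro p
      have h1 := hdeg p
      simp only [hℓ] at h1
      rw [G_eq, G_eq]
      linarith [h1, hc0]
    -- find x ∈ B₂ \ B₁
    have hx : ∃ x ∈ B₂, x ∉ B₁ := by
      by_contra hx
      push_neg at hx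
      have hsub : B₂ ⊆ B₁ := hx
      exact hne (Finset.eq_of_subset_of_card_le hsub (by omega)).symm
    obtain ⟨x, hxB₂, hxB₁⟩ := hx
    set T := insert x B₁ with hT
    have hTP : T ⊆ P := by
      intro y hy
      rcases Finset.mem_insert.1 hy with rfl | hy
      · exact hB₂P hxB₂
      · exact hB₁P hy
    have hTcard : T.card = d + 1 := by
      rw [hT, Finset.card_insert_of_notMem hxB₁, hB₁]
    have hval : ∀ p ∈ T, LB B₁ p + cB B₁ = 0 := by
      intro p hp
      have hG : G B₁ p = 0 := by
        rcases Finset.mem_insert.1 hp with rfl | hp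
        · rw [hGeq, G_vanish hB₂ hxB₂, mul_zero]
        · exact G_vanish hB₁ hp
      rw [G_eq] at hG
      linarith
    obtain ⟨hz, _⟩ := KL hgen hTP hTcard (LB B₁) (LB_add B₁) (LB_smul B₁) (cB B₁) 0 hval
    obtain ⟨y, hy⟩ := LB_ne hgen hd hPd hB₁P hB₁
    exact hy (hz y)
  · left
    push_neg at hdeg
    exact hdeg


end withP

lemma vol_insert {B : Finset Pt} (hB : B.card = d) {p : Pt} (hp : p ∉ B) :
    simplexVolume (insert p B) = |G B p| / (Nat.factorial d) := by
  have hc : (insert p B).card = d + 1 := by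
    rw [Finset.card_insert_of_notMem hp, hB]
  have hr : Set.range (Fin.cons p (enum B) : Fin (d + 1) → Pt) = ↑(insert p B) := by
    rw [Fin.range_cons, enum_range hB, Finset.coe_insert]
  exact simplexVolume_eq hc hr

lemma arith {d t : ℕ} (hd : 2 ≤ d) (ht : d + 1 ≤ t) :
    t + (t ^ d * t ^ d) * (2 * d) + (t ^ d * t ^ (d + 1)) * (2 * d) < 4 * d * t ^ (2 * d + 2) := by
  have ht3 : 3 ≤ t := by omega
  have h1 : 1 ≤ t := by omega
  have e1 : t ^ d * t ^ d = t ^ (2 * d) := by rw [← pow_add]; ring_nf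
  have e2 : t ^ d * t ^ (d + 1) = t ^ (2 * d + 1) := by rw [← pow_add]; ring_nf
  have e3 : t ^ (2 * d + 1) = t ^ (2 * d) * t := pow_succ t (2 * d)
  have e4 : t ^ (2 * d + 2) = t ^ (2 * d) * t * t := by
    rw [pow_succ, pow_succ]
  have hB : 1 ≤ t ^ (2 * d) := Nat.one_le_pow _ _ (by omega)
  rw [e1, e2, e3, e4]
  set B := t ^ (2 * d)
  have ht' : t ≤ B * t := Nat.le_mul_of_pos_left t (by omega)
  have hBB : B * (2 * d) ≤ B * t * (2 * d) :=
    Nat.mul_le_mul_right _ (Nat.le_mul_of_pos_right B (by omega))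
  calc t + B * (2 * d) + B * t * (2 * d)
      ≤ B * t + B * t * (2 * d) + B * t * (2 * d) := by
        exact Nat.add_le_add (Nat.add_le_add ht' hBB) le_rfl
    _ = B * t * (4 * d + 1) := by ring
    _ < B * t * (4 * d * 3) := by
        have hpos : 0 < B * t := Nat.mul_pos (by omega) (by omega)
        exact mul_lt_mul_of_pos_left (by omega) hpos
    _ ≤ B * t * (4 * d * t) := by
        apply Nat.mul_le_mul_left
        exact Nat.mul_le_mul_left _ ht3
    _ = 4 * d * (B * t * t) := by ring

lemma step {t : ℕ} (hd : 2 ≤ d) (ht : d + 1 ≤ t) {P : Finset Pt}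
    (hgen : ∀ s ∈ Finset.powersetCard (d + 1) P, affineSpan ℝ (s : Set Pt) = ⊤)
    (hn : 4 * d * t ^ (2 * d + 2) ≤ P.card)
    {S : Finset Pt} (hSP : S ⊆ P) (hSc : S.card < t)
    (hGood : ∀ e₁ ∈ Finset.powersetCard (d + 1) S, ∀ e₂ ∈ Finset.powersetCard (d + 1) S,
      simplexVolume e₁ = simplexVolume e₂ → e₁ = e₂) :
    ∃ p ∈ P, p ∉ S ∧ ∀ e₁ ∈ Finset.powersetCard (d + 1) (insert p S),
      ∀ e₂ ∈ Finset.powersetCard (d + 1) (insert p S),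
      simplexVolume e₁ = simplexVolume e₂ → e₁ = e₂ := by
  have hd1 : 1 ≤ d := by omega
  have hPd : d < P.card := by
    have h1 : 1 ≤ t ^ (2 * d + 2) := Nat.one_le_pow _ _ (by omega)
    have : 4 * d * 1 ≤ 4 * d * t ^ (2 * d + 2) := Nat.mul_le_mul_left _ h1
    omega
  have hfac : (0 : ℝ) < (Nat.factorial d : ℝ) := by
    exact_mod_cast Nat.factorial_pos d
  set idx1 := (S.powersetCard d ×ˢ S.powersetCard d).filter (fun q => q.1 ≠ q.2) with hidx1
  set U1 := idx1.biUnion (fun q =>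
    P.filter (fun p => G q.1 p = 1 * G q.2 p) ∪
    P.filter (fun p => G q.1 p = (-1) * G q.2 p)) with hU1
  set idx2 := S.powersetCard d ×ˢ S.powersetCard (d + 1) with hidx2
  set U2 := idx2.biUnion (fun q =>
    P.filter (fun p => G q.1 p = (Nat.factorial d : ℝ) * simplexVolume q.2) ∪
    P.filter (fun p => G q.1 p = -((Nat.factorial d : ℝ) * simplexVolume q.2))) with hU2
  have hmemB : ∀ B ∈ S.powersetCard d, B ⊆ P ∧ B.card = d := by
    intro B hB
    obtain ⟨h1, h2⟩ := Finset.mem_powersetCard.1 hB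
    exact ⟨h1.trans hSP, h2⟩
  have hU1card : U1.card ≤ (t ^ d * t ^ d) * (2 * d) := by
    apply Finset.card_biUnion_le_card_mul _ _ _ ?_ |>.trans
    · apply Nat.mul_le_mul_right
      calc idx1.card ≤ (S.powersetCard d ×ˢ S.powersetCard d).card := Finset.card_filter_le _ _
        _ = (S.powersetCard d).card * (S.powersetCard d).card := Finset.card_product _ _
        _ ≤ t ^ d * t ^ d := by
            rw [Finset.card_powersetCard]
            have h1 : S.card.choose d ≤ t ^ d :=
              (Nat.choose_le_pow _ _).trans (Nat.pow_le_pow_left (by omega) _)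
            exact Nat.mul_le_mul h1 h1
    · intro q hq
      obtain ⟨hqp, hqne⟩ := Finset.mem_filter.1 hq
      obtain ⟨hq1, hq2⟩ := Finset.mem_product.1 hqp
      obtain ⟨h1P, h1c⟩ := hmemB _ hq1
      obtain ⟨h2P, h2c⟩ := hmemB _ hq2
      calc (P.filter (fun p => G q.1 p = 1 * G q.2 p) ∪
          P.filter (fun p => G q.1 p = (-1) * G q.2 p)).card
          ≤ (P.filter (fun p => G q.1 p = 1 * G q.2 p)).card +
            (P.filter (fun p => G q.1 p = (-1) * G q.2 p)).card := Finset.card_union_le _ _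
        _ ≤ d + d := Nat.add_le_add
            (pair_card hgen hd1 hPd h1P h2P h1c h2c hqne 1 (Or.inl rfl))
            (pair_card hgen hd1 hPd h1P h2P h1c h2c hqne (-1) (Or.inr rfl))
        _ = 2 * d := by ring
  have hU2card : U2.card ≤ (t ^ d * t ^ (d + 1)) * (2 * d) := by
    apply Finset.card_biUnion_le_card_mul _ _ _ ?_ |>.trans
    · apply Nat.mul_le_mul_right
      calc idx2.card = (S.powersetCard d).card * (S.powersetCard (d + 1)).card :=
            Finset.card_product _ _
        _ ≤ t ^ d * t ^ (d + 1) := by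
            rw [Finset.card_powersetCard, Finset.card_powersetCard]
            exact Nat.mul_le_mul
              ((Nat.choose_le_pow _ _).trans (Nat.pow_le_pow_left (by omega) _))
              ((Nat.choose_le_pow _ _).trans (Nat.pow_le_pow_left (by omega) _))
    · intro q hq
      obtain ⟨hq1, _⟩ := Finset.mem_product.1 hq
      obtain ⟨h1P, h1c⟩ := hmemB _ hq1
      calc (P.filter (fun p => G q.1 p = (Nat.factorial d : ℝ) * simplexVolume q.2) ∪
          P.filter (fun p => G q.1 p = -((Nat.factorial d : ℝ) * simplexVolume q.2))).card
          ≤ _ + _ := Finset.card_union_le _ _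
        _ ≤ d + d := Nat.add_le_add
            (single_card hgen hd1 hPd h1P h1c _)
            (single_card hgen hd1 hPd h1P h1c _)
        _ = 2 * d := by ring
  have htot : (S ∪ U1 ∪ U2).card < P.card := by
    calc (S ∪ U1 ∪ U2).card ≤ (S ∪ U1).card + U2.card := Finset.card_union_le _ _
      _ ≤ S.card + U1.card + U2.card := Nat.add_le_add (Finset.card_union_le _ _) le_rfl
      _ ≤ t + (t ^ d * t ^ d) * (2 * d) + (t ^ d * t ^ (d + 1)) * (2 * d) := by
          exact Nat.add_le_add (Nat.add_le_add hSc.le hU1card) hU2card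
      _ < 4 * d * t ^ (2 * d + 2) := arith hd ht
      _ ≤ P.card := hn
  have hex : ∃ p, p ∈ P ∧ p ∉ (S ∪ U1 ∪ U2) := by
    have h1 : 0 < (P \ (S ∪ U1 ∪ U2)).card := by
      have := Finset.le_card_sdiff (S ∪ U1 ∪ U2) P
      omega
    obtain ⟨p, hp⟩ := Finset.card_pos.1 h1
    obtain ⟨h2, h3⟩ := Finset.mem_sdiff.1 hp
    exact ⟨p, h2, h3⟩
  obtain ⟨p, hpP, hpX⟩ := hex
  have hpS : p ∉ S := fun h => hpX (Finset.mem_union_left _ (Finset.mem_union_left _ h))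
  have hpU1 : p ∉ U1 := fun h => hpX (Finset.mem_union_left _ (Finset.mem_union_right _ h))
  have hpU2 : p ∉ U2 := fun h => hpX (Finset.mem_union_right _ h)
  refine ⟨p, hpP, hpS, ?_⟩
  intro e₁ he₁ e₂ he₂ hv
  by_contra hne
  obtain ⟨hsub₁, hc₁⟩ := Finset.mem_powersetCard.1 he₁
  obtain ⟨hsub₂, hc₂⟩ := Finset.mem_powersetCard.1 he₂
  -- helper facts for an e containing p
  have eraseFacts : ∀ e : Finset Pt, e ⊆ insert p S → e.card = d + 1 → p ∈ e →
      (e.erase p ⊆ S ∧ (e.erase p).card = d ∧ p ∉ e.erase p ∧ insert p (e.erase p) = e ∧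
        simplexVolume e = |G (e.erase p) p| / (Nat.factorial d)) := by
    intro e hesub hec hpe
    have h1 : e.erase p ⊆ S := by
      intro x hx
      obtain ⟨hx1, hx2⟩ := Finset.mem_erase.1 hx
      rcases Finset.mem_insert.1 (hesub hx2) with h | h
      · exact absurd h hx1
      · exact h
    have h2 : (e.erase p).card = d := by
      rw [Finset.card_erase_of_mem hpe, hec]
      omega
    have h3 : p ∉ e.erase p := Finset.notMem_erase _ _
    have h4 : insert p (e.erase p) = e := Finset.insert_erase hpe
    refine ⟨h1, h2, h3, h4, ?_⟩
    have h5 := vol_insert h2 h3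
    rwa [h4] at h5
  have eSub : ∀ e : Finset Pt, e ⊆ insert p S → p ∉ e → e ⊆ S := by
    intro e hesub hpe x hx
    rcases Finset.mem_insert.1 (hesub hx) with h | h
    · exact absurd (h ▸ hx) hpe
    · exact h
  by_cases hp1 : p ∈ e₁ <;> by_cases hp2 : p ∈ e₂
  · -- both contain p
    obtain ⟨hB₁S, hB₁c, hpB₁, hins₁, hvol₁⟩ := eraseFacts e₁ hsub₁ hc₁ hp1
    obtain ⟨hB₂S, hB₂c, hpB₂, hins₂, hvol₂⟩ := eraseFacts e₂ hsub₂ hc₂ hp2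
    have habs : |G (e₁.erase p) p| = |G (e₂.erase p) p| := by
      rw [hvol₁, hvol₂] at hv
      field_simp at hv
      exact hv
    have hBne : e₁.erase p ≠ e₂.erase p := by
      intro h
      exact hne (by rw [← hins₁, h, hins₂])
    apply hpU1
    rw [hU1]
    apply Finset.mem_biUnion.2
    refine ⟨(e₁.erase p, e₂.erase p), ?_, ?_⟩
    · rw [hidx1]
      exact Finset.mem_filter.2 ⟨Finset.mem_product.2
        ⟨Finset.mem_powersetCard.2 ⟨hB₁S, hB₁c⟩, Finset.mem_powersetCard.2 ⟨hB₂S, hB₂c⟩⟩, hBne⟩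
    · rcases abs_eq_abs.1 habs with h | h
      · exact Finset.mem_union_left _ (Finset.mem_filter.2 ⟨hpP, by rw [one_mul]; exact h⟩)
      · exact Finset.mem_union_right _ (Finset.mem_filter.2 ⟨hpP, by rw [neg_one_mul]; exact h⟩)
  · -- p ∈ e₁ only
    obtain ⟨hB₁S, hB₁c, hpB₁, hins₁, hvol₁⟩ := eraseFacts e₁ hsub₁ hc₁ hp1
    have he₂S : e₂ ⊆ S := eSub e₂ hsub₂ hp2
    have habs : |G (e₁.erase p) p| = (Nat.factorial d : ℝ) * simplexVolume e₂ := by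
      rw [hvol₁] at hv
      field_simp at hv
      linarith
    apply hpU2
    rw [hU2]
    apply Finset.mem_biUnion.2
    refine ⟨(e₁.erase p, e₂), ?_, ?_⟩
    · rw [hidx2]
      exact Finset.mem_product.2
        ⟨Finset.mem_powersetCard.2 ⟨hB₁S, hB₁c⟩, Finset.mem_powersetCard.2 ⟨he₂S, hc₂⟩⟩
    · rcases abs_cases (G (e₁.erase p) p) with ⟨ha, _⟩ | ⟨ha, _⟩
      · exact Finset.mem_union_left _ (Finset.mem_filter.2 ⟨hpP, by rw [← ha, habs]⟩)
      · refine Finset.mem_union_right _ (Finset.mem_filter.2 ⟨hpP, ?_⟩)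
        show _ = -((Nat.factorial d : ℝ) * _)
        linarith [habs, ha]
  · -- p ∈ e₂ only
    obtain ⟨hB₂S, hB₂c, hpB₂, hins₂, hvol₂⟩ := eraseFacts e₂ hsub₂ hc₂ hp2
    have he₁S : e₁ ⊆ S := eSub e₁ hsub₁ hp1
    have habs : |G (e₂.erase p) p| = (Nat.factorial d : ℝ) * simplexVolume e₁ := by
      rw [hvol₂] at hv
      field_simp at hv
      linarith
    apply hpU2
    rw [hU2]
    apply Finset.mem_biUnion.2
    refine ⟨(e₂.erase p, e₁), ?_, ?_⟩
    · rw [hidx2]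
      exact Finset.mem_product.2
        ⟨Finset.mem_powersetCard.2 ⟨hB₂S, hB₂c⟩, Finset.mem_powersetCard.2 ⟨he₁S, hc₁⟩⟩
    · rcases abs_cases (G (e₂.erase p) p) with ⟨ha, _⟩ | ⟨ha, _⟩
      · exact Finset.mem_union_left _ (Finset.mem_filter.2 ⟨hpP, by rw [← ha, habs]⟩)
      · refine Finset.mem_union_right _ (Finset.mem_filter.2 ⟨hpP, ?_⟩)
        show _ = -((Nat.factorial d : ℝ) * _)
        linarith [habs, ha]
  · -- neither
    have he₁S : e₁ ⊆ S := eSub e₁ hsub₁ hp1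
    have he₂S : e₂ ⊆ S := eSub e₂ hsub₂ hp2
    exact hne (hGood e₁ (Finset.mem_powersetCard.2 ⟨he₁S, hc₁⟩)
      e₂ (Finset.mem_powersetCard.2 ⟨he₂S, hc₂⟩) hv)


end Aux


theorem stmt_10 (d t n : ℕ) (hd : 2 ≤ d) (ht : d + 1 ≤ t)
    (P : Finset (EuclideanSpace ℝ (Fin d))) (hP : P.card = n)
    (hn : 4 * d * t ^ (2 * d + 2) ≤ n)
    (hgen : ∀ s ∈ Finset.powersetCard (d + 1) P,
      affineSpan ℝ (s : Set (EuclideanSpace ℝ (Fin d))) = ⊤) :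
    ∃ S ⊆ P, t ≤ S.card ∧
      ∀ e₁ ∈ Finset.powersetCard (d + 1) S, ∀ e₂ ∈ Finset.powersetCard (d + 1) S,
        simplexVolume e₁ = simplexVolume e₂ → e₁ = e₂ := by
  have hn' : 4 * d * t ^ (2 * d + 2) ≤ P.card := by omega
  have main : ∀ k, k ≤ t → ∃ S ⊆ P, S.card = k ∧
      ∀ e₁ ∈ Finset.powersetCard (d + 1) S, ∀ e₂ ∈ Finset.powersetCard (d + 1) S,
        simplexVolume e₁ = simplexVolume e₂ → e₁ = e₂ := by
    intro k
    induction k with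
    | zero =>
      intro _
      refine ⟨∅, Finset.empty_subset _, Finset.card_empty, ?_⟩
      intro e₁ he₁ e₂ he₂ _
      obtain ⟨hs, hc⟩ := Finset.mem_powersetCard.1 he₁
      have := Finset.card_le_card hs
      simp only [Finset.card_empty] at this
      omega
    | succ k ih =>
      intro hk
      obtain ⟨S, hSP, hScard, hGood⟩ := ih (by omega)
      obtain ⟨p, hpP, hpS, hGood'⟩ := step hd ht hgen hn' hSP (by omega) hGood
      refine ⟨insert p S, Finset.insert_subset hpP hSP, ?_, hGood'⟩
      rw [Finset.card_insert_of_notMem hpS, hScard]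
  obtain ⟨S, hSP, hScard, hGood⟩ := main t le_rfl
  exact ⟨S, hSP, le_of_eq hScard.symm, hGood⟩
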